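/- Let ℒ be a first-order language extending the language of rings and let M be an ℒ-structure whose underlying ring is a field. Then for every subset A ⊆ M, the definable closure dcl_ℒ(A) is a subfield of M and the field extension M/dcl_ℒ(A) is separable. -/

import Mathlib

/-!
STATEMENT 2 (Remark 2.2(5)): If `L` extends the language of rings and `M` is an
`L`-structure whose underlying ring is a field, then for every `A ⊆ M` the definable
closure `dcl_L(A)` is a subfield of `M` and the extension `M/dcl_L(A)` is separable.
-/

open FirstOrder FirstOrder.Ring

/-- `v` is linearly independent over the subset `S` of `Ω`. -/
def LinIndepOver (Ω : Type*) [Field Ω] (S : Set Ω) {n : ℕ} (v : Fin n → Ω) : Prop :=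
  ∀ c : Fin n → Ω, (∀ i, c i ∈ S) → (∑ i, c i * v i) = 0 → ∀ i, c i = 0

/-- `F` is linearly disjoint from `L` over `K` inside the ambient field `Ω`. -/
def LinDisjOver (Ω : Type*) [Field Ω] (K F L : Set Ω) : Prop :=
  ∀ (n : ℕ) (v : Fin n → Ω), (∀ i, v i ∈ F) →
    LinIndepOver Ω K v → LinIndepOver Ω L v

/-- The field extension `L/K` (subsets of `Ω`) is separable: either the characteristic is
`0` (the condition is then vacuous), or the characteristic is a prime `p` and `K` is
linearly disjoint from `L^p` over `K^p`. -/
def SepExtOn (Ω : Type*) [Field Ω] (K L : Set Ω) : Prop :=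
  ∀ p : ℕ, p.Prime → CharP Ω p →
    LinDisjOver Ω ((· ^ p) '' K) K ((· ^ p) '' L)

/-- The definable closure of `A` in the `L`-structure `M`: the set of `b` that are the
unique solution of some `L`-formula with parameters from `A`. -/
def dcl (L : Language) (M : Type*) [L.Structure M] (A : Set M) : Set M :=
  {b | ∃ ψ : L.Formula (↥A ⊕ Fin 1),
    ψ.Realize (Sum.elim Subtype.val fun _ => b) ∧
    ∀ b' : M, ψ.Realize (Sum.elim Subtype.val fun _ => b') → b' = b}

section Auxiliary
open FirstOrder.Language

theorem formula_realize_iInf {L : Language} {M : Type*} [L.Structure M] {α β : Type*}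
    (s : Finset β) (f : β → L.Formula α) (v : α → M) :
    Formula.Realize (BoundedFormula.iInf (fun b : s => f b)) v ↔ ∀ b ∈ s, (f b).Realize v := by
  simp only [Formula.Realize, BoundedFormula.realize_iInf, Subtype.forall]

/-- The definable closure is closed under definability: if `x` is the unique solution of a
(parameter-free) formula evaluated at parameters from `dcl L M A`, then `x ∈ dcl L M A`. -/
theorem mem_dcl_of_formula {L : Language} {M : Type*} [L.Structure M] {A : Set M}
    {n : ℕ} (θ : L.Formula (Fin n ⊕ Fin 1)) (b : Fin n → M)
    (hb : ∀ i, b i ∈ dcl L M A) (x : M)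
    (hx : θ.Realize (Sum.elim b fun _ => x))
    (huniq : ∀ x', θ.Realize (Sum.elim b fun _ => x') → x' = x) :
    x ∈ dcl L M A := by
  classical
  choose ψ hψ hψu using hb
  set g : Fin n → (↥A ⊕ Fin 1) → ((↥A ⊕ Fin 1) ⊕ Fin n) := fun i =>
    Sum.elim (fun a => Sum.inl (Sum.inl a)) (fun _ => Sum.inr i) with hg
  set h : (Fin n ⊕ Fin 1) → ((↥A ⊕ Fin 1) ⊕ Fin n) :=
    Sum.elim Sum.inr (fun _ => Sum.inl (Sum.inr 0)) with hh
  set χ : L.Formula ((↥A ⊕ Fin 1) ⊕ Fin n) :=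
    (BoundedFormula.iInf (fun b : (Finset.univ : Finset (Fin n)) => (fun i => (ψ i).relabel (g i)) b)) ⊓ θ.relabel h with hχ
  have key : ∀ x' : M, (χ.iExs (Fin n)).Realize (Sum.elim Subtype.val fun _ => x') ↔
      ∃ w : Fin n → M, (∀ i, (ψ i).Realize (Sum.elim Subtype.val fun _ => w i)) ∧
        θ.Realize (Sum.elim w fun _ => x') := by
    intro x'
    rw [Formula.realize_iExs]
    apply exists_congr
    intro w
    have e1 : ∀ i : Fin n,
        (Sum.elim (Sum.elim Subtype.val fun _ => x') w) ∘ (g i)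
          = Sum.elim Subtype.val (fun _ => w i) := by
      intro i; funext a; cases a <;> simp [hg]
    have e2 : (Sum.elim (Sum.elim Subtype.val fun _ => x') w) ∘ h
        = Sum.elim w (fun _ => x') := by
      funext a; cases a <;> simp [hh]
    rw [hχ, Formula.realize_inf,
      formula_realize_iInf Finset.univ (fun i => Formula.relabel (g i) (ψ i)), Formula.realize_relabel, e2]
    simp only [Finset.mem_univ, true_implies, Formula.realize_relabel]
    constructor
    · rintro ⟨h1, h2⟩
      exact ⟨fun i => by rw [← e1 i]; exact h1 i, h2⟩
    · rintro ⟨h1, h2⟩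
      exact ⟨fun i => by rw [e1 i]; exact h1 i, h2⟩
  refine ⟨χ.iExs (Fin n), ?_, ?_⟩
  · exact (key x).2 ⟨b, hψ, hx⟩
  · intro x' hx'
    obtain ⟨w, hw1, hw2⟩ := (key x').1 hx'
    have : w = b := funext fun i => hψu i _ (hw1 i)
    subst this
    exact huniq x' hw2

/-- Powers of a ring term. -/
def rtPow {α : Type*} (t : Language.ring.Term α) : ℕ → Language.ring.Term α
  | 0 => 1
  | k + 1 => t * rtPow t k

@[simp] theorem realize_rtPow {α R : Type*} [Field R]
    [CompatibleRing R] (t : Language.ring.Term α) (k : ℕ) (v : α → R) :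
    Term.realize v (rtPow t k) = (Term.realize v t) ^ k := by
  induction k with
  | zero => simp [rtPow]
  | succ k ih => rw [rtPow, realize_mul, ih, pow_succ, mul_comm]

/-- Finite sums of ring terms. -/
def rtSum {α : Type*} : ∀ {n : ℕ}, (Fin n → Language.ring.Term α) → Language.ring.Term α
  | 0, _ => 0
  | _ + 1, f => rtSum (f ∘ Fin.castSucc) + f (Fin.last _)

@[simp] theorem realize_rtSum {α R : Type*} [Field R]
    [CompatibleRing R] {n : ℕ} (f : Fin n → Language.ring.Term α) (v : α → R) :
    Term.realize v (rtSum f) = ∑ i, Term.realize v (f i) := by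
  induction n with
  | zero => simp [rtSum]
  | succ n ih => rw [rtSum, realize_add, ih, Fin.sum_univ_castSucc]; rfl

end Auxiliary

open FirstOrder.Language in
theorem dcl_isSubfield_and_separable
    (L : Language) (M : Type*) [Field M] [CompatibleRing M] [L.Structure M]
    -- the language `L` extends the language of rings, compatibly with the field structure
    (φ : Language.ring →ᴸ L) [φ.IsExpansionOn M]
    (A : Set M) :
    (∃ K : Subfield M, (K : Set M) = dcl L M A) ∧
      SepExtOn M (dcl L M A) (Set.univ : Set M) := by
  classical
  have memR : ∀ {n : ℕ} (ρ : Language.ring.Formula (Fin n ⊕ Fin 1)) (b : Fin n → M),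
      (∀ i, b i ∈ dcl L M A) → ∀ x : M,
      ρ.Realize (Sum.elim b fun _ => x) →
      (∀ x', ρ.Realize (Sum.elim b fun _ => x') → x' = x) → x ∈ dcl L M A := by
    intro n ρ b hb x hx hu
    exact mem_dcl_of_formula (φ.onFormula ρ) b hb x
      ((φ.realize_onFormula ρ).2 hx)
      (fun x' h => hu x' ((φ.realize_onFormula ρ).1 h))
  constructor
  · -- the subfield structure
    refine ⟨{ carrier := dcl L M A
              zero_mem' := ?zero
              one_mem' := ?one
              add_mem' := ?add
              mul_mem' := ?mul
              neg_mem' := ?neg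
              inv_mem' := ?inv }, rfl⟩
    case zero =>
      refine memR (n := 0) (Term.equal (Term.var (Sum.inr 0)) 0) Fin.elim0
        (fun i => i.elim0) 0 ?_ ?_
      · simp [Formula.realize_equal]
      · intro x' h; simpa [Formula.realize_equal] using h
    case one =>
      refine memR (n := 0) (Term.equal (Term.var (Sum.inr 0)) 1) Fin.elim0
        (fun i => i.elim0) 1 ?_ ?_
      · simp [Formula.realize_equal]
      · intro x' h; simpa [Formula.realize_equal] using h
    case add =>
      intro a b ha hb
      refine memR (n := 2)
        (Term.equal (Term.var (Sum.inr 0))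
          (Term.var (Sum.inl 0) + Term.var (Sum.inl 1))) ![a, b]
        (fun i => by fin_cases i <;> assumption) (a + b) ?_ ?_
      · simp [Formula.realize_equal]
      · intro x' h; simpa [Formula.realize_equal] using h
    case mul =>
      intro a b ha hb
      refine memR (n := 2)
        (Term.equal (Term.var (Sum.inr 0))
          (Term.var (Sum.inl 0) * Term.var (Sum.inl 1))) ![a, b]
        (fun i => by fin_cases i <;> assumption) (a * b) ?_ ?_
      · simp [Formula.realize_equal]
      · intro x' h; simpa [Formula.realize_equal] using h
    case neg =>
      intro a ha
      refine memR (n := 1)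
        (Term.equal (Term.var (Sum.inr 0)) (-Term.var (Sum.inl 0))) ![a]
        (fun i => by fin_cases i <;> assumption) (-a) ?_ ?_
      · simp [Formula.realize_equal]
      · intro x' h; simpa [Formula.realize_equal] using h
    case inv =>
      intro a ha
      refine memR (n := 1)
        ((Term.equal (Term.var (Sum.inl 0) * Term.var (Sum.inr 0)) 1) ⊔
          ((Term.equal (Term.var (Sum.inl 0)) 0) ⊓ (Term.equal (Term.var (Sum.inr 0)) 0)))
        ![a] (fun i => by fin_cases i <;> assumption) a⁻¹ ?_ ?_
      · by_cases h0 : a = 0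
        · subst h0
          simp [Formula.realize_sup, Formula.realize_inf, Formula.realize_equal]
        · simp [Formula.realize_sup, Formula.realize_inf, Formula.realize_equal,
            mul_inv_cancel₀ h0]
      · intro x' h
        simp only [Formula.realize_sup, Formula.realize_inf, Formula.realize_equal,
          realize_mul, realize_one, realize_zero, Term.realize_var, Sum.elim_inl,
          Sum.elim_inr, Matrix.cons_val_zero] at h
        rcases h with h | ⟨h1, h2⟩
        · exact eq_inv_of_mul_eq_one_right h
        · rw [h1, h2, inv_zero]
  · -- separability
    intro p hp hchar
    haveI := hchar
    haveI : Fact p.Prime := ⟨hp⟩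
    intro n v hv hindep
    have main : ∀ k : ℕ, ∀ e : Fin n → M, (∑ i, e i ^ p * v i) = 0 →
        (Finset.univ.filter (fun i => e i ≠ 0)).card ≤ k → ∀ i, e i = 0 := by
      intro k
      induction k with
      | zero =>
        intro e hrel hcard i
        by_contra hne
        have hmem : i ∈ Finset.univ.filter (fun i => e i ≠ 0) := by simp [hne]
        have := Finset.card_pos.2 ⟨i, hmem⟩
        omega
      | succ k ih =>
        intro e hrel hcard
        by_contra hne
        push_neg at hne
        obtain ⟨j, hj⟩ := hne
        set s : Finset (Fin n) := Finset.univ.filter (fun i => e i ≠ 0) with hs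
        have hjs : j ∈ s := by simp [hs, hj]
        set e' : Fin n → M := fun i => e i / e j with he'
        have he'j : e' j = 1 := div_self hj
        have he's : ∀ i, i ∉ s → e' i = 0 := by
          intro i hi
          have hz : e i = 0 := by
            by_contra hcon; exact hi (by simp [hs, hcon])
          simp [he', hz]
        have he'rel : (∑ i, e' i ^ p * v i) = 0 := by
          have hterm : ∀ i : Fin n, e' i ^ p * v i = (e j ^ p)⁻¹ * (e i ^ p * v i) := by
            intro i
            rw [he']
            rw [div_pow, div_eq_mul_inv]
            ring
          rw [Finset.sum_congr rfl (fun i _ => hterm i), ← Finset.mul_sum, hrel, mul_zero]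
        have huw : ∀ w : Fin n → M, (∀ i, i ∉ s → w i = 0) → w j = 1 →
            (∑ i, w i ^ p * v i) = 0 → w = e' := by
          intro w hw0 hwj hwrel
          have hdiff : (∑ i, (w i - e' i) ^ p * v i) = 0 := by
            have hc : ∀ i : Fin n, (w i - e' i) ^ p * v i
                = w i ^ p * v i - e' i ^ p * v i := by
              intro i; rw [sub_pow_char, sub_mul]
            rw [Finset.sum_congr rfl (fun i _ => hc i), Finset.sum_sub_distrib,
              hwrel, he'rel, sub_zero]
          have hsub : Finset.univ.filter (fun i => w i - e' i ≠ 0) ⊆ s.erase j := by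
            intro i hi
            simp only [Finset.mem_filter, Finset.mem_univ, true_and] at hi
            rcases em (i ∈ s) with h | h
            · refine Finset.mem_erase.2 ⟨?_, h⟩
              rintro rfl
              exact hi (by rw [hwj, he'j, sub_self])
            · exact absurd (by rw [hw0 i h, he's i h, sub_self]) hi
          have hcard' : (Finset.univ.filter (fun i => w i - e' i ≠ 0)).card ≤ k := by
            have h1 := Finset.card_le_card hsub
            have h2 : (s.erase j).card = s.card - 1 := Finset.card_erase_of_mem hjs
            have h3 : 0 < s.card := Finset.card_pos.2 ⟨j, hjs⟩
            omega
          have hz := ih (fun i => w i - e' i) hdiff hcard'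
          funext i
          exact sub_eq_zero.mp (hz i)
        have hmem : ∀ i0 : Fin n, e' i0 ∈ dcl L M A := by
          intro i0
          set W : Fin n → Language.ring.Term ((Fin n ⊕ Fin 1) ⊕ Fin n) :=
            fun i => Term.var (Sum.inr i) with hW
          set ρ : Language.ring.Formula ((Fin n ⊕ Fin 1) ⊕ Fin n) :=
            (BoundedFormula.iInf (fun b : (sᶜ : Finset (Fin n)) => (fun i => Term.equal (W i) 0) b)) ⊓
              (Term.equal (W j) 1 ⊓
                (Term.equal (rtSum (fun i => rtPow (W i) p *
                    Term.var (Sum.inl (Sum.inl i)))) 0 ⊓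
                  Term.equal (Term.var (Sum.inl (Sum.inr 0))) (W i0))) with hρ
          set θ : L.Formula (Fin n ⊕ Fin 1) := (φ.onFormula ρ).iExs (Fin n) with hθ
          have hreal : ∀ x : M, θ.Realize (Sum.elim v fun _ => x) ↔
              ∃ w : Fin n → M, (∀ i, i ∉ s → w i = 0) ∧ w j = 1 ∧
                (∑ i, w i ^ p * v i) = 0 ∧ x = w i0 := by
            intro x
            rw [hθ, Formula.realize_iExs]
            apply exists_congr
            intro w
            simp only [id_eq, φ.realize_onFormula, hρ, Formula.realize_inf,
              formula_realize_iInf, Formula.realize_equal, realize_rtSum, realize_mul,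
              realize_rtPow, Term.realize_var, Sum.elim_inl, Sum.elim_inr,
              realize_zero, realize_one, Finset.mem_compl, hW]
            rw [formula_realize_iInf sᶜ (fun i => (Term.var (Sum.inr i)).equal 0)]
            simp only [Formula.realize_equal, Term.realize_var, Sum.elim_inr, realize_zero,
              Finset.mem_compl]
          refine mem_dcl_of_formula θ v hv (e' i0) ?_ ?_
          · exact (hreal (e' i0)).2 ⟨e', he's, he'j, he'rel, rfl⟩
          · intro x' hx'
            obtain ⟨w, hw0, hwj, hwrel, hxw⟩ := (hreal x').1 hx'
            rw [hxw, huw w hw0 hwj hwrel]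
        have hcontra := hindep (fun i => e' i ^ p)
          (fun i => ⟨e' i, hmem i, rfl⟩) he'rel j
        rw [he'j, one_pow] at hcontra
        exact one_ne_zero hcontra
    intro c hc hsum i
    choose d hd1 hd2 using fun i => hc i
    have hd2' : ∀ i, d i ^ p = c i := hd2
    have hz : ∀ i, d i = 0 := by
      refine main n d ?_ ?_
      · rw [Finset.sum_congr rfl (fun i _ => by rw [hd2' i])]
        exact hsum
      · exact (Finset.card_filter_le _ _).trans (by simp)
    rw [← hd2' i, hz i]
    exact zero_pow hp.ne_zero
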